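/- Let α, β ≥ −1/2 and μ the measure on [−1,1]^d with density ∏_i (1−x_i)^{α_i}(1+x_i)^{β_i}. Then μ is doubling with respect to the distance ρ(x,y) = max_i |arccos x_i − arccos y_i|: there is C = C(α,β,d) with μ(B(y,2δ)) ≤ C·μ(B(y,δ)) for all y ∈ [−1,1]^d and 0 < δ ≤ π/2. -/

import Mathlib

open Real Set MeasureTheory Finset

namespace Stmt18Aux


noncomputable def pfun (A B : ℝ) : ℝ → ℝ := fun θ => θ ^ A * (π - θ) ^ B

lemma pfun_cont (A B : ℝ) (hA : 0 ≤ A) (hB : 0 ≤ B) : Continuous (pfun A B) := by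
  have h1 : Continuous fun x : ℝ => x ^ A :=
    continuous_iff_continuousAt.2 fun x => Real.continuousAt_rpow_const x A (Or.inr hA)
  have h2 : Continuous fun x : ℝ => x ^ B :=
    continuous_iff_continuousAt.2 fun x => Real.continuousAt_rpow_const x B (Or.inr hB)
  exact h1.mul (h2.comp (continuous_const.sub continuous_id))

lemma pfun_nonneg (A B : ℝ) {θ : ℝ} (h : θ ∈ Icc 0 π) : 0 ≤ pfun A B θ :=
  mul_nonneg (Real.rpow_nonneg h.1 _) (Real.rpow_nonneg (by linarith [h.2]) _)

lemma pfun_intOn (A B : ℝ) (hA : 0 ≤ A) (hB : 0 ≤ B) {s : Set ℝ} (hs : s ⊆ Icc 0 π) :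
    IntegrableOn (pfun A B) s := by
  exact ((pfun_cont A B hA hB).integrableOn_Icc).mono_set hs

lemma measJ (a b : ℝ) : MeasurableSet (Icc 0 π ∩ Ioo a b) :=
  measurableSet_Icc.inter measurableSet_Ioo

/-- simple lower bound for the integral of pfun over a subinterval -/
lemma int_lower (A B : ℝ) (hA : 0 ≤ A) (hB : 0 ≤ B) {c d m : ℝ} (hcd : c ≤ d) (hm : 0 ≤ m)
    (hsub : Icc c d ⊆ Icc 0 π) (hp : ∀ θ ∈ Icc c d, m ≤ pfun A B θ) :
    m * (d - c) ≤ ∫ θ in Icc c d, pfun A B θ := by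
  have h := setIntegral_ge_of_const_le (μ := volume) measurableSet_Icc
    (by simp [Real.volume_Icc]) hp (pfun_intOn A B hA hB hsub)
  simp [Real.volume_Icc, ENNReal.toReal_ofReal (by linarith : (0:ℝ) ≤ d - c)] at h
  rw [max_eq_left (by linarith : (0:ℝ) ≤ d - c)] at h
  linarith

/-- simple upper bound for the integral of pfun over J = Icc 0 π ∩ Ioo a b -/
lemma int_upper (A B : ℝ) (hA : 0 ≤ A) (hB : 0 ≤ B) {a b M : ℝ} (hM : 0 ≤ M)
    (hp : ∀ θ ∈ Icc 0 π ∩ Ioo a b, pfun A B θ ≤ M) (hab : a ≤ b) :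
    ∫ θ in Icc 0 π ∩ Ioo a b, pfun A B θ ≤ M * (b - a) := by
  have hfin : volume (Icc 0 π ∩ Ioo a b) ≤ volume (Ioo a b) := measure_mono inter_subset_right
  have hne : volume (Icc 0 π ∩ Ioo a b) ≠ ⊤ := by
    refine ne_top_of_le_ne_top ?_ hfin
    simp [Real.volume_Ioo]
  calc ∫ θ in Icc 0 π ∩ Ioo a b, pfun A B θ ≤ ∫ _ in Icc 0 π ∩ Ioo a b, M := by
        refine setIntegral_mono_on (pfun_intOn A B hA hB inter_subset_left)
          (integrableOn_const hne) (measJ a b) hp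
    _ = M * (volume (Icc 0 π ∩ Ioo a b)).toReal := by
        rw [setIntegral_const, smul_eq_mul, measureReal_def]; ring
    _ ≤ M * (b - a) := by
        refine mul_le_mul_of_nonneg_left ?_ hM
        have := ENNReal.toReal_mono (by simp [Real.volume_Ioo]) hfin
        rw [Real.volume_Ioo] at this
        exact this.trans (le_of_eq (ENNReal.toReal_ofReal (by linarith)))





lemma pfun_int_nonneg (A B : ℝ) {s : Set ℝ} (hs : s ⊆ Icc 0 π) (hsm : MeasurableSet s) :
    0 ≤ ∫ θ in s, pfun A B θ :=
  setIntegral_nonneg hsm fun θ hθ => pfun_nonneg A B (hs hθ)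

lemma int_lower' (A B : ℝ) (hA : 0 ≤ A) (hB : 0 ≤ B) {a b c d m : ℝ} (hcd : c ≤ d) (hm : 0 ≤ m)
    (hsub : Icc c d ⊆ Icc 0 π ∩ Ioo a b) (hp : ∀ θ ∈ Icc c d, m ≤ pfun A B θ) :
    m * (d - c) ≤ ∫ θ in Icc 0 π ∩ Ioo a b, pfun A B θ := by
  refine (int_lower A B hA hB hcd hm (hsub.trans inter_subset_left) hp).trans ?_
  refine setIntegral_mono_set (pfun_intOn A B hA hB inter_subset_left) ?_
    (HasSubset.Subset.eventuallyLE hsub)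
  filter_upwards [ae_restrict_mem (measJ a b)] with θ hθ using pfun_nonneg A B hθ.1

/-- Case `t ≤ π/2`, `δ < π/8` of the doubling property for `pfun`. -/
lemma pcase2 (A B : ℝ) (hA : 0 ≤ A) (hB : 0 ≤ B) (t δ : ℝ) (ht0 : 0 ≤ t) (ht : t ≤ π / 2)
    (hδ : 0 < δ) (hδ' : δ < π / 8) :
    ∫ θ in Icc 0 π ∩ Ioo (t - 2 * δ) (t + 2 * δ), pfun A B θ ≤
      (16 * (8:ℝ) ^ A * (4:ℝ) ^ B) * ∫ θ in Icc 0 π ∩ Ioo (t - δ) (t + δ), pfun A B θ := by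
  have hπ := Real.pi_pos
  have ht2δ : 0 < t + 2 * δ := by linarith
  -- upper bound on J2
  have hup : ∫ θ in Icc 0 π ∩ Ioo (t - 2 * δ) (t + 2 * δ), pfun A B θ ≤
      ((t + 2 * δ) ^ A * π ^ B) * (4 * δ) := by
    have h := int_upper A B hA hB
      (M := (t + 2 * δ) ^ A * π ^ B)
      (mul_nonneg (Real.rpow_nonneg ht2δ.le _) (Real.rpow_nonneg hπ.le _))
      (fun θ hθ => by
        obtain ⟨⟨h0, hπ'⟩, _, hlt⟩ := hθ
        exact mul_le_mul (Real.rpow_le_rpow h0 hlt.le hA)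
          (Real.rpow_le_rpow (by linarith) (by linarith) hB)
          (Real.rpow_nonneg (by linarith) _) (Real.rpow_nonneg ht2δ.le _))
      (by linarith : t - 2 * δ ≤ t + 2 * δ)
    calc ∫ θ in Icc 0 π ∩ Ioo (t - 2 * δ) (t + 2 * δ), pfun A B θ
        ≤ ((t + 2 * δ) ^ A * π ^ B) * (t + 2 * δ - (t - 2 * δ)) := h
      _ = ((t + 2 * δ) ^ A * π ^ B) * (4 * δ) := by ring_nf
  -- lower bound on J1 via K = Icc (t+δ/4) (t+δ/2)
  have hlow : (((t + 2 * δ) / 8) ^ A * (π / 4) ^ B) * (δ / 4) ≤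
      ∫ θ in Icc 0 π ∩ Ioo (t - δ) (t + δ), pfun A B θ := by
    have h := int_lower' A B hA hB (a := t - δ) (b := t + δ)
      (c := t + δ / 4) (d := t + δ / 2) (m := ((t + 2 * δ) / 8) ^ A * (π / 4) ^ B)
      (by linarith) (mul_nonneg (Real.rpow_nonneg (by positivity) _) (Real.rpow_nonneg (by positivity) _))
      (fun θ hθ => ⟨⟨by linarith [hθ.1], by linarith [hθ.2]⟩, by linarith [hθ.1], by linarith [hθ.2]⟩)
      (fun θ hθ => by
        obtain ⟨h1, h2⟩ := hθ
        refine mul_le_mul (Real.rpow_le_rpow (by positivity) (by linarith) hA)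
          (Real.rpow_le_rpow (by positivity) (by linarith) hB)
          (Real.rpow_nonneg (by positivity) _) (Real.rpow_nonneg (by linarith) _))
    calc (((t + 2 * δ) / 8) ^ A * (π / 4) ^ B) * (δ / 4)
        = (((t + 2 * δ) / 8) ^ A * (π / 4) ^ B) * (t + δ / 2 - (t + δ / 4)) := by ring_nf
      _ ≤ _ := h
  -- combine
  refine hup.trans ?_
  refine le_trans (le_of_eq ?_) (mul_le_mul_of_nonneg_left hlow
    (by positivity : (0:ℝ) ≤ 16 * (8:ℝ) ^ A * (4:ℝ) ^ B))
  have e1 : ((8:ℝ) ^ A) * ((t + 2 * δ) / 8) ^ A = (t + 2 * δ) ^ A := by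
    rw [← Real.mul_rpow (by norm_num) (by positivity)]
    congr 1; ring
  have e2 : ((4:ℝ) ^ B) * (π / 4) ^ B = π ^ B := by
    rw [← Real.mul_rpow (by norm_num) (by positivity)]
    congr 1; ring
  calc ((t + 2 * δ) ^ A * π ^ B) * (4 * δ)
      = (((8:ℝ) ^ A) * ((t + 2 * δ) / 8) ^ A * (((4:ℝ) ^ B) * (π / 4) ^ B)) * (4 * δ) := by
        rw [e1, e2]
    _ = 16 * (8:ℝ) ^ A * (4:ℝ) ^ B * ((((t + 2 * δ) / 8) ^ A * (π / 4) ^ B) * (δ / 4)) := by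
        ring





/-- Reflection of a set integral over `θ ↦ π - θ`. -/
lemma reflect (f : ℝ → ℝ) (a b : ℝ) :
    ∫ θ in Icc 0 π ∩ Ioo a b, f θ = ∫ θ in Icc 0 π ∩ Ioo (π - b) (π - a), f (π - θ) := by
  have himg : (fun θ : ℝ => π - θ) '' (Icc 0 π ∩ Ioo (π - b) (π - a)) = Icc 0 π ∩ Ioo a b := by
    ext x
    constructor
    · rintro ⟨θ, ⟨⟨h0, hp⟩, h1, h2⟩, rfl⟩
      simp only [mem_inter_iff, Set.mem_Icc, Set.mem_Ioo]
      refine ⟨⟨by linarith, by linarith⟩, by linarith, by linarith⟩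
    · rintro ⟨⟨h0, hp⟩, h1, h2⟩
      exact ⟨π - x, ⟨⟨by linarith, by linarith⟩, by linarith, by linarith⟩, by ring⟩
  have := integral_image_eq_integral_abs_deriv_smul (f := fun θ : ℝ => π - θ)
    (f' := fun _ => (-1 : ℝ)) (measJ (π - b) (π - a))
    (fun x _ => by simpa using ((hasDerivAt_id x).const_sub π).hasDerivWithinAt)
    (fun x _ y _ h => by dsimp at h; linarith) f
  rw [himg] at this
  simpa using this

/-- Doubling property for the model weight `pfun A B`. -/
lemma pDoubling (A B : ℝ) (hA : 0 ≤ A) (hB : 0 ≤ B) :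
    ∃ C : ℝ, 0 < C ∧ ∀ t ∈ Icc 0 π, ∀ δ : ℝ, 0 < δ → δ ≤ π / 2 →
      ∫ θ in Icc 0 π ∩ Ioo (t - 2 * δ) (t + 2 * δ), pfun A B θ ≤
        C * ∫ θ in Icc 0 π ∩ Ioo (t - δ) (t + δ), pfun A B θ := by
  have hπ := Real.pi_pos
  set T := ∫ θ in Icc 0 π, pfun A B θ with hT
  have hT0 : 0 ≤ T := pfun_int_nonneg A B le_rfl measurableSet_Icc
  set m1 : ℝ := (π / 32) ^ A * (π / 32) ^ B with hm1
  have hm1pos : 0 < m1 := mul_pos (Real.rpow_pos_of_pos (by positivity) _)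
    (Real.rpow_pos_of_pos (by positivity) _)
  set C1 : ℝ := T / (m1 * (π / 16)) with hC1
  have hC1nonneg : 0 ≤ C1 := div_nonneg hT0 (by positivity)
  set C2 : ℝ := 16 * (8:ℝ) ^ A * (4:ℝ) ^ B with hC2
  set C2' : ℝ := 16 * (8:ℝ) ^ B * (4:ℝ) ^ A with hC2'
  refine ⟨max 1 (max C1 (max C2 C2')), lt_of_lt_of_le one_pos (le_max_left _ _), ?_⟩
  intro t ht δ hδ hδπ
  set C := max 1 (max C1 (max C2 C2')) with hC
  have hJ1nonneg : 0 ≤ ∫ θ in Icc 0 π ∩ Ioo (t - δ) (t + δ), pfun A B θ :=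
    pfun_int_nonneg A B inter_subset_left (measJ _ _)
  have bump : ∀ c : ℝ, c ≤ C →
      (∫ θ in Icc 0 π ∩ Ioo (t - 2*δ) (t + 2*δ), pfun A B θ ≤
        c * ∫ θ in Icc 0 π ∩ Ioo (t - δ) (t + δ), pfun A B θ) →
      ∫ θ in Icc 0 π ∩ Ioo (t - 2*δ) (t + 2*δ), pfun A B θ ≤
        C * ∫ θ in Icc 0 π ∩ Ioo (t - δ) (t + δ), pfun A B θ :=
    fun c hc h => h.trans (mul_le_mul_of_nonneg_right hc hJ1nonneg)
  rcases lt_or_ge δ (π / 8) with hsmall | hbig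
  · -- small δ
    rcases le_or_gt t (π / 2) with htle | htgt
    · exact bump C2 ((le_max_left C2 C2').trans ((le_max_right C1 _).trans (le_max_right 1 _)))
        (pcase2 A B hA hB t δ ht.1 htle hδ hsmall)
    · -- reflect
      have h2 : ∫ θ in Icc 0 π ∩ Ioo (t - 2*δ) (t + 2*δ), pfun A B θ
          = ∫ θ in Icc 0 π ∩ Ioo ((π - t) - 2*δ) ((π - t) + 2*δ), pfun B A θ := by
        rw [reflect (pfun A B) (t - 2*δ) (t + 2*δ)]
        have : Ioo (π - (t + 2*δ)) (π - (t - 2*δ)) = Ioo ((π - t) - 2*δ) ((π - t) + 2*δ) := by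
          congr 1 <;> ring
        rw [this]
        refine setIntegral_congr_fun (measJ _ _) fun θ _ => ?_
        simp only [pfun]
        rw [show π - (π - θ) = θ by ring]
        ring
      have h1 : ∫ θ in Icc 0 π ∩ Ioo (t - δ) (t + δ), pfun A B θ
          = ∫ θ in Icc 0 π ∩ Ioo ((π - t) - δ) ((π - t) + δ), pfun B A θ := by
        rw [reflect (pfun A B) (t - δ) (t + δ)]
        have : Ioo (π - (t + δ)) (π - (t - δ)) = Ioo ((π - t) - δ) ((π - t) + δ) := by
          congr 1 <;> ring
        rw [this]
        refine setIntegral_congr_fun (measJ _ _) fun θ _ => ?_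
        simp only [pfun]
        rw [show π - (π - θ) = θ by ring]
        ring
      rw [h1, h2]
      have key := pcase2 B A hB hA (π - t) δ (by linarith [ht.2]) (by linarith) hδ hsmall
      refine key.trans (mul_le_mul_of_nonneg_right ?_ ?_)
      · exact (le_max_right C2 C2').trans ((le_max_right C1 _).trans (le_max_right 1 _))
      · exact pfun_int_nonneg B A inter_subset_left (measJ _ _)
  · -- large δ : δ ≥ π/8
    set l := max (t - δ) 0 with hl
    set u := min (t + δ) π with hu
    have hl0 : 0 ≤ l := le_max_right _ _
    have hltδ : t - δ ≤ l := le_max_left _ _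
    have huπ : u ≤ π := min_le_right _ _
    have hutδ : u ≤ t + δ := min_le_left _ _
    have hul : δ ≤ u - l := by
      rcases le_total (t - δ) 0 with h | h
      · rw [hl, max_eq_right h, hu]
        have : δ ≤ min (t + δ) π := le_min (by linarith [ht.1]) (by linarith)
        linarith [this]
      · rw [hl, max_eq_left h, hu]
        have : t ≤ min (t + δ) π := le_min (by linarith) ht.2
        linarith [this]
    set c := (l + u) / 2 with hc'
    have hKsub : Icc (c - π/32) (c + π/32) ⊆ Icc 0 π ∩ Ioo (t - δ) (t + δ) := by
      intro θ hθ
      obtain ⟨h1', h2'⟩ := hθ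
      have hc1 : l + π / 16 ≤ c := by rw [hc']; linarith [hul, hbig]
      have hc2 : c ≤ u - π / 16 := by rw [hc']; linarith [hul, hbig]
      refine ⟨⟨by linarith, by linarith⟩, by linarith, by linarith⟩
    have hKbound : ∀ θ ∈ Icc (c - π/32) (c + π/32), m1 ≤ pfun A B θ := by
      intro θ hθ
      obtain ⟨h1', h2'⟩ := hθ
      have hc1 : l + π / 16 ≤ c := by rw [hc']; linarith [hul, hbig]
      have hc2 : c ≤ u - π / 16 := by rw [hc']; linarith [hul, hbig]
      have hθ1 : π / 32 ≤ θ := by linarith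
      have hθ2 : π / 32 ≤ π - θ := by linarith
      exact mul_le_mul (Real.rpow_le_rpow (by positivity) hθ1 hA)
        (Real.rpow_le_rpow (by positivity) hθ2 hB)
        (Real.rpow_nonneg (by positivity) _) (Real.rpow_nonneg (by linarith) _)
    have hlow : m1 * (π / 16) ≤ ∫ θ in Icc 0 π ∩ Ioo (t - δ) (t + δ), pfun A B θ := by
      have := int_lower' A B hA hB (c := c - π/32) (d := c + π/32) (m := m1)
        (by linarith) hm1pos.le hKsub hKbound
      calc m1 * (π / 16) = m1 * (c + π/32 - (c - π/32)) := by ring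
        _ ≤ _ := this
    have hup : ∫ θ in Icc 0 π ∩ Ioo (t - 2*δ) (t + 2*δ), pfun A B θ ≤ T := by
      refine setIntegral_mono_set (pfun_intOn A B hA hB le_rfl) ?_
        (HasSubset.Subset.eventuallyLE inter_subset_left)
      filter_upwards [ae_restrict_mem measurableSet_Icc] with θ hθ using pfun_nonneg A B hθ
    refine bump C1 ((le_max_left C1 _).trans (le_max_right 1 _)) ?_
    refine hup.trans ?_
    have : T = C1 * (m1 * (π / 16)) := by
      rw [hC1]; field_simp
    rw [this]
    exact mul_le_mul_of_nonneg_left hlow hC1nonneg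




lemma one_sub_cos_bounds {θ : ℝ} (h0 : 0 ≤ θ) (hπ : θ ≤ π) :
    2 / π ^ 2 * θ ^ 2 ≤ 1 - Real.cos θ ∧ 1 - Real.cos θ ≤ 1 / 2 * θ ^ 2 := by
  have hpi := Real.pi_pos
  have hid : Real.cos θ = 2 * Real.cos (θ / 2) ^ 2 - 1 := by
    have h := Real.cos_two_mul (θ / 2)
    rw [show 2 * (θ / 2) = θ by ring] at h
    exact h
  have hpyth := Real.sin_sq_add_cos_sq (θ / 2)
  have hub : Real.sin (θ / 2) ≤ θ / 2 := Real.sin_le (by linarith)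
  have hlb : 2 / π * (θ / 2) ≤ Real.sin (θ / 2) := Real.mul_le_sin (by linarith) (by linarith)
  have hs0 : 0 ≤ Real.sin (θ / 2) := le_trans (by positivity) hlb
  have hidentity : 1 - Real.cos θ = 2 * Real.sin (θ / 2) ^ 2 := by nlinarith [hid, hpyth]
  constructor
  · rw [hidentity]
    have h1 : (2 / π * (θ / 2)) ^ 2 ≤ Real.sin (θ / 2) ^ 2 := by
      apply pow_le_pow_left₀ (by positivity) hlb
    have h2 : (2 / π * (θ / 2)) ^ 2 = θ ^ 2 / π ^ 2 := by field_simp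
    have key : θ ^ 2 / π ^ 2 ≤ Real.sin (θ / 2) ^ 2 := h2 ▸ h1
    calc 2 / π ^ 2 * θ ^ 2 = 2 * (θ ^ 2 / π ^ 2) := by ring
      _ ≤ 2 * Real.sin (θ / 2) ^ 2 := by linarith
  · rw [hidentity]
    nlinarith [pow_le_pow_left₀ hs0 hub 2]

lemma one_add_cos_bounds {θ : ℝ} (h0 : 0 ≤ θ) (hπ : θ ≤ π) :
    2 / π ^ 2 * (π - θ) ^ 2 ≤ 1 + Real.cos θ ∧ 1 + Real.cos θ ≤ 1 / 2 * (π - θ) ^ 2 := by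
  have h := one_sub_cos_bounds (θ := π - θ) (by linarith) (by linarith)
  rw [Real.cos_pi_sub] at h
  constructor <;> [exact le_of_le_of_eq h.1 (by ring); exact le_of_eq_of_le (by ring) h.2]

lemma sin_bounds {θ : ℝ} (h0 : 0 ≤ θ) (hπ : θ ≤ π) :
    2 / π ^ 2 * (θ * (π - θ)) ≤ Real.sin θ ∧ Real.sin θ ≤ 2 / π * (θ * (π - θ)) := by
  have hpi := Real.pi_pos
  rcases le_total θ (π / 2) with h | h
  · have hub : Real.sin θ ≤ θ := Real.sin_le h0
    have hlb : 2 / π * θ ≤ Real.sin θ := Real.mul_le_sin h0 h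
    constructor
    · refine le_trans ?_ hlb
      rw [div_mul_eq_mul_div, div_mul_eq_mul_div, div_le_div_iff₀ (by positivity) (by positivity)]
      nlinarith [mul_nonneg (mul_nonneg h0 h0) hpi.le]
    · refine hub.trans ?_
      rw [div_mul_eq_mul_div, le_div_iff₀ (by positivity)]
      nlinarith
  · have hub : Real.sin θ ≤ π - θ := by
      rw [← Real.sin_pi_sub]; exact Real.sin_le (by linarith)
    have hlb : 2 / π * (π - θ) ≤ Real.sin θ := by
      rw [← Real.sin_pi_sub]; exact Real.mul_le_sin (by linarith) (by linarith)
    constructor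
    · refine le_trans ?_ hlb
      rw [div_mul_eq_mul_div, div_mul_eq_mul_div, div_le_div_iff₀ (by positivity) (by positivity)]
      nlinarith [mul_nonneg (mul_nonneg (sub_nonneg.2 hπ) (sub_nonneg.2 hπ)) hpi.le]
    · refine hub.trans ?_
      rw [div_mul_eq_mul_div, le_div_iff₀ (by positivity)]
      nlinarith

lemma sandwich_rpow {l u x s : ℝ} (γ : ℝ) (hl : 0 < l) (hx : 0 < x)
    (h1 : l * x ≤ s) (h2 : s ≤ u * x) :
    min (l ^ γ) (u ^ γ) * x ^ γ ≤ s ^ γ ∧ s ^ γ ≤ max (l ^ γ) (u ^ γ) * x ^ γ := by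
  have hs : 0 < s := lt_of_lt_of_le (by positivity) h1
  have hu : 0 < u := by
    by_contra hcon
    push_neg at hcon
    nlinarith
  have hr1 : l ≤ s / x := (le_div_iff₀ hx).2 h1
  have hr2 : s / x ≤ u := (div_le_iff₀ hx).2 h2
  have hseq : s ^ γ = (s / x) ^ γ * x ^ γ := by
    rw [← Real.mul_rpow (by positivity) hx.le, div_mul_cancel₀ _ hx.ne']
  have hxγ : 0 ≤ x ^ γ := Real.rpow_nonneg hx.le _
  rcases le_or_gt 0 γ with hγ | hγ
  · constructor
    · rw [hseq]
      exact mul_le_mul_of_nonneg_right ((min_le_left _ _).trans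
        (Real.rpow_le_rpow hl.le hr1 hγ)) hxγ
    · rw [hseq]
      exact mul_le_mul_of_nonneg_right ((Real.rpow_le_rpow (by positivity) hr2 hγ).trans
        (le_max_right _ _)) hxγ
  · constructor
    · rw [hseq]
      exact mul_le_mul_of_nonneg_right ((min_le_right _ _).trans
        (Real.rpow_le_rpow_of_nonpos (by positivity) hr2 hγ.le)) hxγ
    · rw [hseq]
      exact mul_le_mul_of_nonneg_right ((Real.rpow_le_rpow_of_nonpos hl hr1 hγ.le).trans
        (le_max_left _ _)) hxγ




noncomputable def hfun (a b : ℝ) : ℝ → ℝ :=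
  fun θ => Real.sin θ * ((1 - Real.cos θ) ^ a * (1 + Real.cos θ) ^ b)
noncomputable def mconst (a : ℝ) : ℝ := min ((2 / π ^ 2) ^ a) ((1 / 2 : ℝ) ^ a)
noncomputable def Mconst (a : ℝ) : ℝ := max ((2 / π ^ 2) ^ a) ((1 / 2 : ℝ) ^ a)

lemma mconst_pos (a : ℝ) : 0 < mconst a := by
  have := Real.pi_pos
  exact lt_min (Real.rpow_pos_of_pos (by positivity) _) (Real.rpow_pos_of_pos (by norm_num) _)

lemma Mconst_pos (a : ℝ) : 0 < Mconst a :=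
  lt_of_lt_of_le (mconst_pos a) (min_le_left _ _ |>.trans (le_max_left _ _))

lemma sq_rpow {θ : ℝ} (hθ : 0 ≤ θ) (γ : ℝ) : (θ ^ 2) ^ γ = θ ^ (2 * γ) := by
  rw [← Real.rpow_natCast θ 2, ← Real.rpow_mul hθ]
  norm_num

/-- pointwise comparison of `hfun` with the model weight on the open interval -/
lemma hfun_sandwich (a b : ℝ) {θ : ℝ} (h0 : 0 < θ) (hπ : θ < π) :
    2 / π ^ 2 * (mconst a * mconst b) * pfun (2 * a + 1) (2 * b + 1) θ ≤ hfun a b θ ∧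
    hfun a b θ ≤ 2 / π * (Mconst a * Mconst b) * pfun (2 * a + 1) (2 * b + 1) θ := by
  have hpi := Real.pi_pos
  have hπθ : 0 < π - θ := by linarith
  obtain ⟨hc1, hc2⟩ := one_sub_cos_bounds h0.le hπ.le
  obtain ⟨hd1, hd2⟩ := one_add_cos_bounds h0.le hπ.le
  obtain ⟨hs1, hs2⟩ := sin_bounds h0.le hπ.le
  have hP := sandwich_rpow a (l := 2 / π ^ 2) (u := 1 / 2) (by positivity) (by positivity) hc1 hc2
  have hQ := sandwich_rpow b (l := 2 / π ^ 2) (u := 1 / 2) (by positivity) (by positivity) hd1 hd2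
  rw [sq_rpow h0.le] at hP
  rw [sq_rpow hπθ.le] at hQ
  have hPl : mconst a * θ ^ (2 * a) ≤ (1 - Real.cos θ) ^ a := hP.1
  have hPu : (1 - Real.cos θ) ^ a ≤ Mconst a * θ ^ (2 * a) := hP.2
  have hQl : mconst b * (π - θ) ^ (2 * b) ≤ (1 + Real.cos θ) ^ b := hQ.1
  have hQu : (1 + Real.cos θ) ^ b ≤ Mconst b * (π - θ) ^ (2 * b) := hQ.2
  have hma : 0 ≤ mconst a * θ ^ (2 * a) :=
    mul_nonneg (mconst_pos a).le (Real.rpow_nonneg h0.le _)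
  have hmb : 0 ≤ mconst b * (π - θ) ^ (2 * b) :=
    mul_nonneg (mconst_pos b).le (Real.rpow_nonneg hπθ.le _)
  have hP0 : 0 ≤ (1 - Real.cos θ) ^ a := le_trans hma hPl
  have hQ0 : 0 ≤ (1 + Real.cos θ) ^ b := le_trans hmb hQl
  have hS0 : 0 ≤ Real.sin θ :=
    le_trans (mul_nonneg (by positivity) (mul_nonneg h0.le hπθ.le)) hs1
  have hpf : pfun (2 * a + 1) (2 * b + 1) θ =
      (θ * (π - θ)) * (θ ^ (2 * a) * (π - θ) ^ (2 * b)) := by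
    show θ ^ (2 * a + 1) * (π - θ) ^ (2 * b + 1) = _
    rw [Real.rpow_add h0, Real.rpow_add hπθ, Real.rpow_one, Real.rpow_one]
    ring
  constructor
  · rw [hpf]
    have step : (2 / π ^ 2 * (θ * (π - θ))) * ((mconst a * θ ^ (2 * a)) *
        (mconst b * (π - θ) ^ (2 * b))) ≤ hfun a b θ := by
      refine mul_le_mul hs1 (mul_le_mul hPl hQl hmb hP0)
        (mul_nonneg hma hmb) hS0
    refine le_trans (le_of_eq ?_) step
    ring
  · rw [hpf]
    have step : hfun a b θ ≤ (2 / π * (θ * (π - θ))) * ((Mconst a * θ ^ (2 * a)) *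
        (Mconst b * (π - θ) ^ (2 * b))) := by
      refine mul_le_mul hs2 (mul_le_mul hPu hQu hQ0
          (mul_nonneg (Mconst_pos a).le (Real.rpow_nonneg h0.le _)))
        (mul_nonneg hP0 hQ0) (mul_nonneg (by positivity) (mul_nonneg h0.le hπθ.le))
    refine step.trans (le_of_eq ?_)
    ring

lemma measurable_rpow_const (c : ℝ) : Measurable fun x : ℝ => x ^ c :=
  measurable_of_continuousOn_compl_singleton 0 fun x hx =>
    (Real.continuousAt_rpow_const x c (Or.inl hx)).continuousWithinAt

lemma hfun_measurable (a b : ℝ) : Measurable (hfun a b) := by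
  refine Real.measurable_sin.mul (Measurable.mul ?_ ?_)
  · exact (measurable_rpow_const a).comp (measurable_const.sub Real.measurable_cos)
  · exact (measurable_rpow_const b).comp (measurable_const.add Real.measurable_cos)

lemma hfun_nonneg (a b : ℝ) {θ : ℝ} (h : θ ∈ Icc 0 π) : 0 ≤ hfun a b θ :=
  mul_nonneg (Real.sin_nonneg_of_nonneg_of_le_pi h.1 h.2)
    (mul_nonneg (Real.rpow_nonneg (by linarith [Real.cos_le_one θ]) _)
      (Real.rpow_nonneg (by linarith [Real.neg_one_le_cos θ]) _))






lemma set_swap (a b : ℝ) :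
    (Icc 0 π ∩ Ioo a b : Set ℝ) =ᵐ[volume] (Ioo 0 π ∩ Ioo a b : Set ℝ) :=
  MeasureTheory.ae_eq_set_inter Ioo_ae_eq_Icc.symm (Filter.EventuallyEq.refl _ _)

lemma measJ' (a b : ℝ) : MeasurableSet (Ioo 0 π ∩ Ioo a b : Set ℝ) :=
  measurableSet_Ioo.inter measurableSet_Ioo

lemma hfun_intOn (a b : ℝ) (c2 : ℝ)
    (hc2 : ∀ θ ∈ Ioo 0 π, hfun a b θ ≤ c2 * pfun (2*a+1) (2*b+1) θ)
    (hA : 0 ≤ 2*a+1) (hB : 0 ≤ 2*b+1) {s : Set ℝ} (hs : s ⊆ Ioo 0 π) (hsm : MeasurableSet s) :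
    IntegrableOn (hfun a b) s := by
  refine Integrable.mono' (g := fun θ => c2 * pfun (2*a+1) (2*b+1) θ)
    (((pfun_intOn (2*a+1) (2*b+1) hA hB (hs.trans Ioo_subset_Icc_self)).const_mul c2))
    ((hfun_measurable a b).aestronglyMeasurable) ?_
  filter_upwards [ae_restrict_mem hsm] with θ hθ
  rw [Real.norm_eq_abs, abs_of_nonneg (hfun_nonneg a b (Ioo_subset_Icc_self (hs hθ)))]
  exact hc2 θ (hs hθ)

/-- Doubling property for `hfun` on arcs. -/
lemma hDoubling (a b : ℝ) (ha : -(1/2 : ℝ) ≤ a) (hb : -(1/2 : ℝ) ≤ b) :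
    ∃ C : ℝ, 0 < C ∧ ∀ t ∈ Icc 0 π, ∀ δ : ℝ, 0 < δ → δ ≤ π / 2 →
      ∫ θ in Icc 0 π ∩ Ioo (t - 2 * δ) (t + 2 * δ), hfun a b θ ≤
        C * ∫ θ in Icc 0 π ∩ Ioo (t - δ) (t + δ), hfun a b θ := by
  have hpi := Real.pi_pos
  have hA : 0 ≤ 2*a+1 := by linarith
  have hB : 0 ≤ 2*b+1 := by linarith
  obtain ⟨Cp, hCp, hCpdbl⟩ := pDoubling (2*a+1) (2*b+1) hA hB
  set c1 : ℝ := 2 / π ^ 2 * (mconst a * mconst b) with hc1def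
  set c2 : ℝ := 2 / π * (Mconst a * Mconst b) with hc2def
  have hc1 : 0 < c1 := by
    have := mconst_pos a; have := mconst_pos b; positivity
  have hc2 : 0 < c2 := by
    have := Mconst_pos a; have := Mconst_pos b; positivity
  have hub : ∀ θ ∈ Ioo 0 π, hfun a b θ ≤ c2 * pfun (2*a+1) (2*b+1) θ :=
    fun θ hθ => (hfun_sandwich a b hθ.1 hθ.2).2
  have hlb : ∀ θ ∈ Ioo 0 π, c1 * pfun (2*a+1) (2*b+1) θ ≤ hfun a b θ :=
    fun θ hθ => (hfun_sandwich a b hθ.1 hθ.2).1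
  refine ⟨c2 * Cp / c1, by positivity, ?_⟩
  intro t ht δ hδ hδπ
  have pint : ∀ u v : ℝ, IntegrableOn (pfun (2*a+1) (2*b+1)) (Ioo 0 π ∩ Ioo u v) :=
    fun u v => pfun_intOn _ _ hA hB (inter_subset_left.trans Ioo_subset_Icc_self)
  have hint : ∀ u v : ℝ, IntegrableOn (hfun a b) (Ioo 0 π ∩ Ioo u v) :=
    fun u v => hfun_intOn a b c2 hub hA hB inter_subset_left (measJ' u v)
  -- step 1 : J2 integral of h ≤ c2 * J2 integral of p
  have step1 : ∫ θ in Icc 0 π ∩ Ioo (t - 2*δ) (t + 2*δ), hfun a b θ ≤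
      c2 * ∫ θ in Icc 0 π ∩ Ioo (t - 2*δ) (t + 2*δ), pfun (2*a+1) (2*b+1) θ := by
    rw [setIntegral_congr_set (set_swap _ _), setIntegral_congr_set (set_swap _ _),
      ← integral_const_mul]
    refine setIntegral_mono_on (hint _ _) ((pint _ _).const_mul c2) (measJ' _ _) ?_
    exact fun θ hθ => hub θ hθ.1
  -- step 3 : J1 integral of p ≤ (1/c1) * J1 integral of h
  have step3 : ∫ θ in Icc 0 π ∩ Ioo (t - δ) (t + δ), pfun (2*a+1) (2*b+1) θ ≤
      (1 / c1) * ∫ θ in Icc 0 π ∩ Ioo (t - δ) (t + δ), hfun a b θ := by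
    rw [setIntegral_congr_set (set_swap _ _), setIntegral_congr_set (set_swap _ _)]
    have hmono : c1 * ∫ θ in Ioo 0 π ∩ Ioo (t - δ) (t + δ), pfun (2*a+1) (2*b+1) θ ≤
        ∫ θ in Ioo 0 π ∩ Ioo (t - δ) (t + δ), hfun a b θ := by
      rw [← integral_const_mul]
      refine setIntegral_mono_on ((pint _ _).const_mul c1) (hint _ _) (measJ' _ _) ?_
      exact fun θ hθ => hlb θ hθ.1
    rw [one_div, ← div_eq_inv_mul, le_div_iff₀' hc1]
    exact hmono
  calc ∫ θ in Icc 0 π ∩ Ioo (t - 2*δ) (t + 2*δ), hfun a b θ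
      ≤ c2 * ∫ θ in Icc 0 π ∩ Ioo (t - 2*δ) (t + 2*δ), pfun (2*a+1) (2*b+1) θ := step1
    _ ≤ c2 * (Cp * ∫ θ in Icc 0 π ∩ Ioo (t - δ) (t + δ), pfun (2*a+1) (2*b+1) θ) :=
        mul_le_mul_of_nonneg_left (hCpdbl t ht δ hδ hδπ) hc2.le
    _ ≤ c2 * (Cp * ((1/c1) * ∫ θ in Icc 0 π ∩ Ioo (t - δ) (t + δ), hfun a b θ)) :=
        mul_le_mul_of_nonneg_left (mul_le_mul_of_nonneg_left step3 hCp.le) hc2.le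
    _ = (c2 * Cp / c1) * ∫ θ in Icc 0 π ∩ Ioo (t - δ) (t + δ), hfun a b θ := by
        field_simp






/-- the one-dimensional arc in `x`-space -/
def Sset (y δ : ℝ) : Set ℝ :=
  {u : ℝ | u ∈ Icc (-1 : ℝ) 1 ∧ |Real.arccos u - Real.arccos y| < δ}

lemma Sset_eq_image (y δ : ℝ) :
    Sset y δ = Real.cos '' (Icc 0 π ∩ Ioo (Real.arccos y - δ) (Real.arccos y + δ)) := by
  ext x
  constructor
  · rintro ⟨⟨hx1, hx2⟩, habs⟩
    obtain ⟨ha1, ha2⟩ := abs_lt.mp habs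
    exact ⟨Real.arccos x, ⟨⟨Real.arccos_nonneg x, Real.arccos_le_pi x⟩,
      by linarith, by linarith⟩, Real.cos_arccos hx1 hx2⟩
  · rintro ⟨θ, ⟨⟨h0, hπ⟩, h1, h2⟩, rfl⟩
    refine ⟨⟨Real.neg_one_le_cos θ, Real.cos_le_one θ⟩, ?_⟩
    rw [Real.arccos_cos h0 hπ]
    exact abs_lt.mpr ⟨by linarith, by linarith⟩

lemma cov (a b y δ : ℝ) :
    ∫ x in Sset y δ, (1 - x) ^ a * (1 + x) ^ b =
      ∫ θ in Icc 0 π ∩ Ioo (Real.arccos y - δ) (Real.arccos y + δ), hfun a b θ := by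
  rw [Sset_eq_image]
  rw [integral_image_eq_integral_abs_deriv_smul (measJ _ _)
    (fun x _ => (Real.hasDerivAt_cos x).hasDerivWithinAt)
    (Real.injOn_cos.mono inter_subset_left) (fun x => (1 - x) ^ a * (1 + x) ^ b)]
  refine setIntegral_congr_fun (measJ _ _) fun θ hθ => ?_
  have hs : 0 ≤ Real.sin θ := Real.sin_nonneg_of_nonneg_of_le_pi hθ.1.1 hθ.1.2
  simp only [smul_eq_mul, abs_neg, abs_of_nonneg hs, hfun]

lemma Sset_measurable (y δ : ℝ) : MeasurableSet (Sset y δ) := by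
  have : Sset y δ = Icc (-1 : ℝ) 1 ∩
      ((fun u => |Real.arccos u - Real.arccos y|) ⁻¹' Iio δ) := by
    ext u; simp [Sset, Set.mem_Icc]
  rw [this]
  exact measurableSet_Icc.inter
    (((Real.continuous_arccos.sub continuous_const).abs.measurable) measurableSet_Iio)

lemma Sset_int_nonneg (a b y δ : ℝ) :
    0 ≤ ∫ x in Sset y δ, (1 - x) ^ a * (1 + x) ^ b := by
  refine setIntegral_nonneg (Sset_measurable y δ) fun u hu => ?_
  obtain ⟨⟨h1, h2⟩, _⟩ := hu
  exact mul_nonneg (Real.rpow_nonneg (by linarith) _) (Real.rpow_nonneg (by linarith) _)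

/-- one-dimensional doubling in `x`-space -/
lemma xDoubling (a b : ℝ) (ha : -(1/2 : ℝ) ≤ a) (hb : -(1/2 : ℝ) ≤ b) :
    ∃ C : ℝ, 0 < C ∧ ∀ y ∈ Icc (-1 : ℝ) 1, ∀ δ : ℝ, 0 < δ → δ ≤ π / 2 →
      ∫ x in Sset y (2 * δ), (1 - x) ^ a * (1 + x) ^ b ≤
        C * ∫ x in Sset y δ, (1 - x) ^ a * (1 + x) ^ b := by
  obtain ⟨C, hC, hdbl⟩ := hDoubling a b ha hb
  refine ⟨C, hC, fun y _ δ hδ hδπ => ?_⟩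
  rw [cov, cov]
  have := hdbl (Real.arccos y) ⟨Real.arccos_nonneg y, Real.arccos_le_pi y⟩ δ hδ hδπ
  exact this





lemma prod_integral (d : ℕ) (f : Fin d → ℝ → ℝ) (S : Fin d → Set ℝ)
    (hS : ∀ i, MeasurableSet (S i)) :
    ∫ x in Set.pi Set.univ S, ∏ i : Fin d, f i (x i) = ∏ i : Fin d, ∫ u in S i, f i u := by
  rw [← integral_indicator (MeasurableSet.univ_pi hS)]
  have hind : ∀ x : Fin d → ℝ,
      (Set.pi Set.univ S).indicator (fun x => ∏ i, f i (x i)) x =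
        ∏ i, (S i).indicator (f i) (x i) := by
    intro x
    by_cases hx : x ∈ Set.pi Set.univ S
    · rw [Set.indicator_of_mem hx]
      exact Finset.prod_congr rfl fun i _ =>
        (Set.indicator_of_mem (hx i (Set.mem_univ i)) (f i)).symm
    · rw [Set.indicator_of_notMem hx]
      obtain ⟨i, hi⟩ := not_forall.mp (by simpa [Set.mem_pi] using hx)
      exact (Finset.prod_eq_zero (Finset.mem_univ i)
        (Set.indicator_of_notMem hi (f i))).symm
  rw [show (fun x : Fin d → ℝ => (Set.pi Set.univ S).indicator (fun x => ∏ i, f i (x i)) x)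
      = fun x => ∏ i, (S i).indicator (f i) (x i) from funext hind]
  rw [MeasureTheory.integral_fintype_prod_volume_eq_prod
    (f := fun i => (S i).indicator (f i))]
  exact Finset.prod_congr rfl fun i _ => integral_indicator (hS i)


end Stmt18Aux

open Stmt18Aux

theorem stmt18 (d : ℕ) (α β : Fin d → ℝ)
    (hα : ∀ i, -(1/2 : ℝ) ≤ α i) (hβ : ∀ i, -(1/2 : ℝ) ≤ β i) :
    ∃ C : ℝ, 0 < C ∧
      ∀ y : Fin d → ℝ, (∀ i, y i ∈ Icc (-1 : ℝ) 1) →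
        ∀ δ : ℝ, 0 < δ → δ ≤ π / 2 →
          (∫ x in {x : Fin d → ℝ | (∀ i, x i ∈ Icc (-1 : ℝ) 1) ∧
                ∀ i, |Real.arccos (x i) - Real.arccos (y i)| < 2 * δ},
              ∏ i : Fin d, (1 - x i) ^ (α i) * (1 + x i) ^ (β i)) ≤
          C * ∫ x in {x : Fin d → ℝ | (∀ i, x i ∈ Icc (-1 : ℝ) 1) ∧
                ∀ i, |Real.arccos (x i) - Real.arccos (y i)| < δ},
              ∏ i : Fin d, (1 - x i) ^ (α i) * (1 + x i) ^ (β i) := by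
  choose C hCpos hC using fun i => xDoubling (α i) (β i) (hα i) (hβ i)
  refine ⟨∏ i, C i, Finset.prod_pos fun i _ => hCpos i, ?_⟩
  intro y hy δ hδ hδπ
  have hset : ∀ r : ℝ, {x : Fin d → ℝ | (∀ i, x i ∈ Icc (-1 : ℝ) 1) ∧
      ∀ i, |Real.arccos (x i) - Real.arccos (y i)| < r} =
      Set.pi Set.univ (fun i => Sset (y i) r) := by
    intro r
    ext x
    simp only [Set.mem_setOf_eq, Set.mem_pi, Set.mem_univ, forall_true_left, Sset,
      forall_const]
    constructor
    · rintro ⟨h1, h2⟩ i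
      exact ⟨h1 i, h2 i⟩
    · intro h
      exact ⟨fun i => (h i).1, fun i => (h i).2⟩
  rw [hset, hset,
    prod_integral d (fun i u => (1 - u) ^ (α i) * (1 + u) ^ (β i)) _
      (fun i => Sset_measurable (y i) (2 * δ)),
    prod_integral d (fun i u => (1 - u) ^ (α i) * (1 + u) ^ (β i)) _
      (fun i => Sset_measurable (y i) δ)]
  rw [← Finset.prod_mul_distrib]
  refine Finset.prod_le_prod (fun i _ => Sset_int_nonneg (α i) (β i) (y i) (2 * δ))
    (fun i _ => hC i (y i) (hy i) δ hδ hδπ)
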